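/- Every p-entropic matroid induces a secret-sharing matroid over an alphabet of size p: if M = (E, r) is realized by random variables {X_e} with values in a p-element set S, then the matrix A whose rows are the outcomes of positive probability is a secret-sharing matrix, and the secret-sharing matroid it induces equals M. -/

import Mathlib

open scoped Classical BigOperators
set_option maxHeartbeats 1000000

/-- Shannon entropy in base `q` of a probability mass function on a finite type. -/
noncomputable def shannonEntropy {α : Type*} [Fintype α] (q : ℝ) (μ : PMF α) : ℝ :=
  -∑ x : α, (μ x).toReal * Real.logb q (μ x).toReal

/-- Marginal of a distribution on `ι → α` on the coordinates in `S`. -/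
noncomputable def marg {ι α : Type*} (μ : PMF (ι → α)) (S : Finset ι) :
    PMF ({ i // i ∈ S } → α) :=
  μ.map fun x i => x i.1

/-- The set `n(i,e,Y)` of possible values in column `e` among rows agreeing with row `i`
on the columns in `Y`. -/
noncomputable def nset {I E α : Type*} [Fintype I] (A : I → E → α)
    (i : I) (e : E) (Y : Finset E) : Finset α :=
  (Finset.univ.filter fun j : I => ∀ y ∈ Y, A j y = A i y).image fun j => A j e

/-- A matrix is a secret-sharing matrix if for every column `e` and set of columns `Y`
not containing `e`, either `n(i,e,Y)` is the whole alphabet for every row `i`, or it is a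
singleton for every row `i`. -/
def IsSecretSharingMatrix {I E α : Type*} [Fintype I] [Fintype α] (A : I → E → α) : Prop :=
  ∀ (e : E) (Y : Finset E), e ∉ Y →
    (∀ i : I, nset A i e Y = (Finset.univ : Finset α)) ∨
    (∀ i : I, (nset A i e Y).card = 1)

open Finset in
set_option linter.unusedSectionVars false


section auxSS
variable {E α : Type*} [Fintype E] [Fintype α]

noncomputable def resF (Y : Finset E) (x : E → α) : {e // e ∈ Y} → α := fun i => x i.1

noncomputable def QQ (f : (E → α) → ℝ) (Y : Finset E) (x : E → α) : ℝ :=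
  ∑ x' : E → α, if ∀ y ∈ Y, x' y = x y then f x' else 0

noncomputable def PP (f : (E → α) → ℝ) (Y : Finset E) (s : {e // e ∈ Y} → α) : ℝ :=
  ∑ x' : E → α, if s = resF Y x' then f x' else 0


lemma ite_nn {c : Prop} [Decidable c] {a : ℝ} (ha : 0 ≤ a) : (0:ℝ) ≤ if c then a else 0 := by
  split
  · exact ha
  · exact le_rfl

lemma resF_eq_iff {Y : Finset E} {x x' : E → α} :
    resF Y x' = resF Y x ↔ ∀ y ∈ Y, x' y = x y := by
  constructor
  · intro h y hy; exact congrFun h ⟨y, hy⟩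
  · intro h; funext i; exact h i.1 i.2

lemma PP_resF (f : (E → α) → ℝ) (Y : Finset E) (x : E → α) :
    PP f Y (resF Y x) = QQ f Y x := by
  unfold PP QQ
  refine Finset.sum_congr rfl fun x' _ => ?_
  refine if_congr ?_ rfl rfl
  exact ⟨fun h => resF_eq_iff.mp h.symm, fun h => (resF_eq_iff.mpr h).symm⟩

lemma QQ_nonneg {f : (E → α) → ℝ} (hf : ∀ x, 0 ≤ f x) (Y : Finset E) (x : E → α) :
    0 ≤ QQ f Y x :=
  Finset.sum_nonneg fun x' _ => ite_nn (hf x')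

lemma le_QQ {f : (E → α) → ℝ} (hf : ∀ x, 0 ≤ f x) (Y : Finset E) (x : E → α) :
    f x ≤ QQ f Y x := by
  have h := Finset.single_le_sum (f := fun x' => if ∀ y ∈ Y, x' y = x y then f x' else 0)
    (fun x' _ => ite_nn (hf x')) (Finset.mem_univ x)
  simpa [QQ] using h

lemma QQ_mono {f : (E → α) → ℝ} (hf : ∀ x, 0 ≤ f x) {Y Y' : Finset E} (h : Y ⊆ Y')
    (x : E → α) : QQ f Y' x ≤ QQ f Y x := by
  refine Finset.sum_le_sum fun x' _ => ?_
  by_cases h' : ∀ y ∈ Y', x' y = x y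
  · rw [if_pos h', if_pos fun y hy => h' y (h hy)]
  · rw [if_neg h']; split <;> first | exact hf x' | exact le_rfl

lemma sum_PP (f : (E → α) → ℝ) (Y : Finset E) :
    ∑ s : {e // e ∈ Y} → α, PP f Y s = ∑ x : E → α, f x := by
  unfold PP
  rw [Finset.sum_comm]
  refine Finset.sum_congr rfl fun x' _ => ?_
  simp

lemma PP_ne_zero_iff {f : (E → α) → ℝ} (hf : ∀ x, 0 ≤ f x) (Y : Finset E)
    (s : {e // e ∈ Y} → α) :
    PP f Y s ≠ 0 ↔ ∃ x, f x ≠ 0 ∧ resF Y x = s := by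
  constructor
  · intro h
    by_contra hc
    push_neg at hc
    apply h
    unfold PP
    refine Finset.sum_eq_zero fun x' _ => ?_
    by_cases hr : s = resF Y x'
    · rw [if_pos hr]
      by_contra hne
      exact (hc x' hne) hr.symm
    · rw [if_neg hr]
  · rintro ⟨x, hx, hres⟩ h0
    unfold PP at h0
    rw [Finset.sum_eq_zero_iff_of_nonneg (fun x' _ => ite_nn (hf x'))] at h0
    have := h0 x (Finset.mem_univ x)
    rw [if_pos hres.symm] at this
    exact hx this

lemma sum_mul_comp (f : (E → α) → ℝ) (Y : Finset E) (g : ({e // e ∈ Y} → α) → ℝ) :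
    ∑ x : E → α, f x * g (resF Y x) = ∑ s : {e // e ∈ Y} → α, PP f Y s * g s := by
  rw [← Finset.sum_fiberwise Finset.univ (resF Y) (fun x => f x * g (resF Y x))]
  refine Finset.sum_congr rfl fun s _ => ?_
  have h1 : ∑ x ∈ Finset.univ.filter (fun x => resF Y x = s), f x * g (resF Y x)
      = ∑ x ∈ Finset.univ.filter (fun x => resF Y x = s), f x * g s := by
    refine Finset.sum_congr rfl fun x hx => ?_
    rw [(Finset.mem_filter.mp hx).2]
  rw [h1, ← Finset.sum_mul]
  congr 1
  unfold PP
  rw [Finset.sum_filter]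
  refine Finset.sum_congr rfl fun x _ => ?_
  by_cases h : resF Y x = s
  · rw [if_pos h, if_pos h.symm]
  · rw [if_neg h, if_neg fun hh => h hh.symm]


noncomputable def VV (f : (E → α) → ℝ) (Y : Finset E) (e : E) (x : E → α) (a : α) : ℝ :=
  ∑ x' : E → α, if (∀ y ∈ Y, x' y = x y) ∧ x' e = a then f x' else 0

lemma QQ_eq_sum_VV (f : (E → α) → ℝ) (Y : Finset E) (e : E) (x : E → α) :
    QQ f Y x = ∑ a : α, VV f Y e x a := by
  unfold QQ VV
  rw [Finset.sum_comm]
  refine Finset.sum_congr rfl fun x' _ => ?_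
  by_cases h : ∀ y ∈ Y, x' y = x y
  · rw [if_pos h]
    rw [Finset.sum_eq_single (x' e)]
    · rw [if_pos ⟨h, rfl⟩]
    · intro b _ hb; rw [if_neg (fun hc => hb hc.2.symm)]
    · intro hb; exact absurd (Finset.mem_univ _) hb
  · rw [if_neg h]
    refine (Finset.sum_eq_zero fun a _ => ?_).symm
    rw [if_neg (fun hc => h hc.1)]

lemma VV_eq_QQ_insert (f : (E → α) → ℝ) {Y : Finset E} {e : E} {x x' : E → α} {a : α}
    (hagree : ∀ y ∈ Y, x' y = x y) (he : x' e = a) :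
    VV f Y e x a = QQ f (insert e Y) x' := by
  unfold VV QQ
  refine Finset.sum_congr rfl fun z _ => ?_
  refine if_congr ?_ rfl rfl
  rw [Finset.forall_mem_insert]
  constructor
  · rintro ⟨hz, hze⟩
    exact ⟨by rw [hze, he], fun y hy => by rw [hz y hy, hagree y hy]⟩
  · rintro ⟨hze, hz⟩
    exact ⟨fun y hy => by rw [hz y hy, hagree y hy], by rw [hze, he]⟩

lemma VV_ne_zero_iff {f : (E → α) → ℝ} (hf : ∀ x, 0 ≤ f x) (Y : Finset E) (e : E)
    (x : E → α) (a : α) :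
    VV f Y e x a ≠ 0 ↔ ∃ z, f z ≠ 0 ∧ (∀ y ∈ Y, z y = x y) ∧ z e = a := by
  constructor
  · intro h
    by_contra hc
    push_neg at hc
    apply h
    refine Finset.sum_eq_zero fun z _ => ?_
    by_cases hz : (∀ y ∈ Y, z y = x y) ∧ z e = a
    · rw [if_pos hz]
      by_contra hne
      exact (hc z hne hz.1) hz.2
    · rw [if_neg hz]
  · rintro ⟨z, hz, hz1, hz2⟩ h0
    unfold VV at h0
    rw [Finset.sum_eq_zero_iff_of_nonneg (fun x' _ => ite_nn (hf x'))] at h0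
    have := h0 z (Finset.mem_univ z)
    rw [if_pos ⟨hz1, hz2⟩] at this
    exact hz this

lemma VV_nonneg {f : (E → α) → ℝ} (hf : ∀ x, 0 ≤ f x) (Y : Finset E) (e : E)
    (x : E → α) (a : α) : 0 ≤ VV f Y e x a :=
  Finset.sum_nonneg fun x' _ => ite_nn (hf x')

lemma sum_div_QQ {f : (E → α) → ℝ} (hf : ∀ x, 0 ≤ f x) (Y : Finset E) :
    ∑ x : E → α, f x * (QQ f Y x)⁻¹ =
      ((Finset.univ.filter fun s : {e // e ∈ Y} → α => PP f Y s ≠ 0).card : ℝ) := by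
  have h : ∀ x : E → α, f x * (QQ f Y x)⁻¹ = f x * (PP f Y (resF Y x))⁻¹ := by
    intro x; rw [PP_resF]
  rw [Finset.sum_congr rfl fun x _ => h x,
    sum_mul_comp f Y (fun s => (PP f Y s)⁻¹)]
  have h2 : ∀ s : {e // e ∈ Y} → α, PP f Y s * (PP f Y s)⁻¹
      = if PP f Y s ≠ 0 then (1:ℝ) else 0 := by
    intro s
    by_cases hs : PP f Y s = 0 <;> simp [hs, mul_inv_cancel₀]
  rw [Finset.sum_congr rfl fun s _ => h2 s, Finset.sum_boole]



lemma sum_pmf_toReal_eq_one {β : Type*} [Fintype β] (μ : PMF β) :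
    ∑ x : β, (μ x).toReal = 1 := by
  have h := μ.tsum_coe
  rw [tsum_fintype] at h
  rw [← ENNReal.toReal_sum (fun a _ => PMF.apply_ne_top μ a), h, ENNReal.toReal_one]

lemma marg_toReal (μ : PMF (E → α)) (Y : Finset E) (s : {e // e ∈ Y} → α) :
    ((marg μ Y) s).toReal = PP (fun x => (μ x).toReal) Y s := by
  rw [marg, PMF.map_apply, tsum_fintype,
    ENNReal.toReal_sum (fun a _ => by split <;> simp [PMF.apply_ne_top])]
  unfold PP resF
  refine Finset.sum_congr rfl fun a _ => ?_
  split <;> simp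

lemma entropy_bridge (μ : PMF (E → α)) (q : ℝ) (Y : Finset E) :
    shannonEntropy q (marg μ Y)
      = -∑ x : E → α, (μ x).toReal * Real.logb q (QQ (fun x => (μ x).toReal) Y x) := by
  unfold shannonEntropy
  have key := sum_mul_comp (fun x => (μ x).toReal) Y
      (fun s => Real.logb q (PP (fun x => (μ x).toReal) Y s))
  simp only [PP_resF] at key
  rw [key]
  congr 1
  refine Finset.sum_congr rfl fun s _ => ?_
  rw [marg_toReal]


lemma count_of_uniform {f : (E → α) → ℝ} (hf : ∀ x, 0 ≤ f x)
    (hf1 : ∑ x : E → α, f x = 1) {q : ℝ} (hq0 : 0 < q) {Y : Finset E} {k : ℕ}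
    (hu : ∀ x, f x ≠ 0 → QQ f Y x = (q ^ k)⁻¹) :
    (((Finset.univ.filter fun s : {e // e ∈ Y} → α => PP f Y s ≠ 0).card : ℝ)) = q ^ k := by
  have h1 : (1:ℝ) = ∑ s : {e // e ∈ Y} → α, PP f Y s := by rw [sum_PP, hf1]
  rw [← Finset.sum_filter_add_sum_filter_not Finset.univ
    (fun s => PP f Y s ≠ 0) (fun s => PP f Y s)] at h1
  have h2 : ∑ s ∈ Finset.univ.filter (fun s : {e // e ∈ Y} → α => ¬ PP f Y s ≠ 0),
      PP f Y s = 0 := by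
    refine Finset.sum_eq_zero fun s hs => ?_
    have := (Finset.mem_filter.mp hs).2
    push_neg at this
    exact this
  have h3 : ∑ s ∈ Finset.univ.filter (fun s : {e // e ∈ Y} → α => PP f Y s ≠ 0),
      PP f Y s = ((Finset.univ.filter fun s : {e // e ∈ Y} → α => PP f Y s ≠ 0).card : ℝ)
        * (q ^ k)⁻¹ := by
    rw [Finset.sum_congr rfl (fun s hs => ?_), Finset.sum_const, nsmul_eq_mul]
    obtain ⟨x, hx, hres⟩ := (PP_ne_zero_iff hf Y s).mp (Finset.mem_filter.mp hs).2
    rw [← hres, PP_resF, hu x hx]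
  rw [h2, add_zero, h3] at h1
  have hqk : (q:ℝ) ^ k ≠ 0 := by positivity
  field_simp at h1
  linarith [h1]

lemma card_filter_insert_le (f : (E → α) → ℝ) (hf : ∀ x, 0 ≤ f x) (e : E) (Y : Finset E) :
    (Finset.univ.filter fun s : {x // x ∈ insert e Y} → α =>
        PP f (insert e Y) s ≠ 0).card ≤
      (Finset.univ.filter fun s : {x // x ∈ Y} → α => PP f Y s ≠ 0).card
        * Fintype.card α := by
  set φ : ({x // x ∈ insert e Y} → α) → ({x // x ∈ Y} → α) × α :=
    fun s => (fun i => s ⟨i.1, Finset.mem_insert_of_mem i.2⟩,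
      s ⟨e, Finset.mem_insert_self e Y⟩) with hφ
  have hmaps : ∀ s ∈ Finset.univ.filter
      (fun s : {x // x ∈ insert e Y} → α => PP f (insert e Y) s ≠ 0),
      φ s ∈ (Finset.univ.filter fun s : {x // x ∈ Y} → α => PP f Y s ≠ 0) ×ˢ
        (Finset.univ : Finset α) := by
    intro s hs
    obtain ⟨x, hx, hres⟩ := (PP_ne_zero_iff hf _ s).mp (Finset.mem_filter.mp hs).2
    rw [Finset.mem_product]
    refine ⟨Finset.mem_filter.mpr ⟨Finset.mem_univ _, ?_⟩, Finset.mem_univ _⟩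
    rw [PP_ne_zero_iff hf]
    refine ⟨x, hx, ?_⟩
    funext i
    have : resF (insert e Y) x ⟨i.1, Finset.mem_insert_of_mem i.2⟩
        = s ⟨i.1, Finset.mem_insert_of_mem i.2⟩ := by rw [hres]
    exact this
  have hinj : Set.InjOn φ ((Finset.univ.filter
      fun s : {x // x ∈ insert e Y} → α => PP f (insert e Y) s ≠ 0) : Set _) := by
    intro s1 _ s2 _ h
    funext i
    rcases Finset.mem_insert.mp i.2 with h1 | h1
    · have h2 := congrArg Prod.snd h
      simp only [hφ] at h2
      have : i = ⟨e, Finset.mem_insert_self e Y⟩ := Subtype.ext h1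
      rw [this]; exact h2
    · have h2 := congrArg (fun t => t.1 ⟨i.1, h1⟩) h
      simp only [hφ] at h2
      have : i = ⟨(⟨i.1, h1⟩ : {x // x ∈ Y}).1, Finset.mem_insert_of_mem h1⟩ :=
        Subtype.ext rfl
      rw [this]; exact h2
  calc (Finset.univ.filter fun s : {x // x ∈ insert e Y} → α =>
      PP f (insert e Y) s ≠ 0).card
      ≤ (((Finset.univ.filter fun s : {x // x ∈ Y} → α => PP f Y s ≠ 0) ×ˢ
          (Finset.univ : Finset α)).card) := Finset.card_le_card_of_injOn φ hmaps hinj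
    _ = _ := by rw [Finset.card_product, Finset.card_univ]


lemma uniform_key {f : (E → α) → ℝ} (hf : ∀ x, 0 ≤ f x)
    (hf1 : ∑ x : E → α, f x = 1) (hp : 2 ≤ Fintype.card α) (r : Finset E → ℕ)
    (hH : ∀ Y : Finset E,
      ∑ x : E → α, f x * Real.logb (Fintype.card α) (QQ f Y x) = -(r Y : ℝ)) :
    ∀ Y : Finset E, ∀ x, f x ≠ 0 → QQ f Y x = ((Fintype.card α : ℝ) ^ (r Y))⁻¹ := by
  set q : ℝ := (Fintype.card α : ℝ) with hqdef
  have hq1 : (1:ℝ) < q := by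
    rw [hqdef]
    exact_mod_cast lt_of_lt_of_le one_lt_two (by exact_mod_cast hp)
  have hq0 : (0:ℝ) < q := lt_trans one_pos hq1
  have hlogq : 0 < Real.log q := Real.log_pos hq1
  have hlogb_qpow : ∀ k : ℕ, Real.logb q ((q ^ k)⁻¹) = -(k:ℝ) := by
    intro k
    rw [Real.logb_inv, Real.logb_pow, Real.logb_self_eq_one hq1, mul_one]
  have hlogb_id : ∀ t : ℝ, Real.log t = Real.logb q t * Real.log q := by
    intro t; rw [Real.logb, div_mul_cancel₀ _ (ne_of_gt hlogq)]
  intro Y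
  induction Y using Finset.induction_on with
  | empty =>
    have hQQ1 : ∀ x : E → α, QQ f ∅ x = 1 := by
      intro x
      unfold QQ
      rw [Finset.sum_congr rfl
        (fun x' _ => if_pos (fun y hy => absurd hy (Finset.notMem_empty y)))]
      exact hf1
    have h0 : (r (∅ : Finset E) : ℝ) = 0 := by
      have h := hH ∅
      rw [Finset.sum_congr rfl
        (fun x _ => by rw [hQQ1 x, Real.logb_one, mul_zero]),
        Finset.sum_const_zero] at h
      linarith
    intro x _
    rw [hQQ1 x, show r (∅ : Finset E) = 0 from by exact_mod_cast h0, pow_zero, inv_one]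
  | @insert e Y he IH =>
    set k := r Y with hk
    set k' := r (insert e Y) with hk'
    intro x₀ hx₀
    have hIH : ∀ x, f x ≠ 0 → QQ f Y x = (q ^ k)⁻¹ := IH
    have hQQpos : ∀ x, f x ≠ 0 → 0 < QQ f (insert e Y) x := fun x hx =>
      lt_of_lt_of_le (lt_of_le_of_ne (hf x) (Ne.symm hx)) (le_QQ hf _ x)
    have hQQle : ∀ x, f x ≠ 0 → QQ f (insert e Y) x ≤ (q ^ k)⁻¹ := fun x hx => by
      rw [← hIH x hx]; exact QQ_mono hf (Finset.subset_insert e Y) x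
    have hT : ∑ x : E → α, f x * (-(k:ℝ) - Real.logb q (QQ f (insert e Y) x))
        = (k':ℝ) - (k:ℝ) := by
      have hsp : ∀ x : E → α, f x * (-(k:ℝ) - Real.logb q (QQ f (insert e Y) x))
          = f x * (-(k:ℝ)) - f x * Real.logb q (QQ f (insert e Y) x) := fun x => by ring
      rw [Finset.sum_congr rfl fun x _ => hsp x, Finset.sum_sub_distrib,
        ← Finset.sum_mul, hf1, hH (insert e Y)]
      ring
    have htermnn : ∀ x ∈ (Finset.univ : Finset (E → α)),
        0 ≤ f x * (-(k:ℝ) - Real.logb q (QQ f (insert e Y) x)) := by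
      intro x _
      by_cases hx : f x = 0
      · rw [hx, zero_mul]
      · refine mul_nonneg (hf x) ?_
        rw [sub_nonneg, ← hlogb_qpow k]
        exact (Real.logb_le_logb hq1 (hQQpos x hx) (by positivity)).mpr (hQQle x hx)
    have hkk' : (k:ℝ) ≤ (k':ℝ) := by
      have h := Finset.sum_nonneg htermnn
      rw [hT] at h; linarith
    by_cases hcase : k' = k
    · have hT0 : ∑ x : E → α,
          f x * (-(k:ℝ) - Real.logb q (QQ f (insert e Y) x)) = 0 := by
        rw [hT, hcase]; ring
      have h := (Finset.sum_eq_zero_iff_of_nonneg htermnn).mp hT0 x₀ (Finset.mem_univ x₀)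
      rcases mul_eq_zero.mp h with h | h
      · exact absurd h hx₀
      · have hlog : Real.logb q (QQ f (insert e Y) x₀) = -(k:ℝ) := by linarith
        have hQ : QQ f (insert e Y) x₀ = (q ^ k)⁻¹ := by
          refine Real.logb_injOn_pos hq1 (Set.mem_Ioi.mpr (hQQpos x₀ hx₀))
            (Set.mem_Ioi.mpr (by positivity)) ?_
          rw [hlog, hlogb_qpow]
        rw [hQ, hcase]
    · have hkn : k ≤ k' := by exact_mod_cast hkk'
      have hk1 : k + 1 ≤ k' := by omega
      set c : ℝ := (q ^ k')⁻¹ with hc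
      have hc0 : 0 < c := by positivity
      have htermG : ∀ x ∈ (Finset.univ : Finset (E → α)),
          0 ≤ f x * (c * (QQ f (insert e Y) x)⁻¹ - 1
            - Real.log (c * (QQ f (insert e Y) x)⁻¹)) := by
        intro x _
        by_cases hx : f x = 0
        · rw [hx, zero_mul]
        · refine mul_nonneg (hf x) ?_
          have ht0 : 0 < c * (QQ f (insert e Y) x)⁻¹ :=
            mul_pos hc0 (inv_pos.mpr (hQQpos x hx))
          have hle := Real.log_le_sub_one_of_pos ht0
          linarith
      have hthird : ∑ x : E → α, f x * Real.log (c * (QQ f (insert e Y) x)⁻¹) = 0 := by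
        have hstep : ∀ x : E → α, f x * Real.log (c * (QQ f (insert e Y) x)⁻¹)
            = f x * Real.log c - f x * (Real.logb q (QQ f (insert e Y) x) * Real.log q) := by
          intro x
          by_cases hx : f x = 0
          · rw [hx]; ring
          · rw [Real.log_mul (ne_of_gt hc0)
                (ne_of_gt (inv_pos.mpr (hQQpos x hx))), Real.log_inv,
              Real.log_inv, ← hlogb_id]
            ring
        rw [Finset.sum_congr rfl fun x _ => hstep x, Finset.sum_sub_distrib,
          ← Finset.sum_mul]
        have hsum2 : ∑ x : E → α, f x * (Real.logb q (QQ f (insert e Y) x) * Real.log q)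
            = (∑ x : E → α, f x * Real.logb q (QQ f (insert e Y) x)) * Real.log q := by
          rw [Finset.sum_mul]
          exact Finset.sum_congr rfl fun x _ => by ring
        rw [hsum2, hH (insert e Y), hf1, hc, Real.log_inv, Real.log_pow]
        ring
      set N' : ℕ := (Finset.univ.filter
        fun s : {x // x ∈ insert e Y} → α => PP f (insert e Y) s ≠ 0).card with hN'
      have hGval : ∑ x : E → α, f x * (c * (QQ f (insert e Y) x)⁻¹ - 1
          - Real.log (c * (QQ f (insert e Y) x)⁻¹)) = c * (N' : ℝ) - 1 := by
        have hsp : ∀ x : E → α, f x * (c * (QQ f (insert e Y) x)⁻¹ - 1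
            - Real.log (c * (QQ f (insert e Y) x)⁻¹))
            = c * (f x * (QQ f (insert e Y) x)⁻¹) - f x
              - f x * Real.log (c * (QQ f (insert e Y) x)⁻¹) := fun x => by ring
        rw [Finset.sum_congr rfl fun x _ => hsp x, Finset.sum_sub_distrib,
          Finset.sum_sub_distrib, ← Finset.mul_sum, sum_div_QQ hf, hf1, hthird, hN']
        ring
      have hNle : (N' : ℝ) ≤ q ^ k' := by
        have h1 := card_filter_insert_le f hf e Y
        have h2 : ((Finset.univ.filter
            fun s : {x // x ∈ Y} → α => PP f Y s ≠ 0).card : ℝ) = q ^ k :=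
          count_of_uniform hf hf1 hq0 hIH
        have h3 : (N' : ℝ) ≤ ((Finset.univ.filter
            fun s : {x // x ∈ Y} → α => PP f Y s ≠ 0).card : ℝ) * q := by
          calc (N' : ℝ) ≤ (((Finset.univ.filter
              fun s : {x // x ∈ Y} → α => PP f Y s ≠ 0).card * Fintype.card α : ℕ) : ℝ) := by
                exact_mod_cast h1
            _ = _ := by push_cast [hqdef]; ring
        calc (N' : ℝ) ≤ q ^ k * q := by rw [← h2]; exact h3
          _ = q ^ (k + 1) := by rw [pow_succ]
          _ ≤ q ^ k' := pow_le_pow_right₀ (le_of_lt hq1) hk1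
      have hGle : ∑ x : E → α, f x * (c * (QQ f (insert e Y) x)⁻¹ - 1
          - Real.log (c * (QQ f (insert e Y) x)⁻¹)) ≤ 0 := by
        rw [hGval, hc]
        have : ((q ^ k')⁻¹ : ℝ) * (N' : ℝ) ≤ (q ^ k')⁻¹ * q ^ k' :=
          mul_le_mul_of_nonneg_left hNle (by positivity)
        rw [inv_mul_cancel₀ (by positivity : (q:ℝ) ^ k' ≠ 0)] at this
        linarith
      have hG0 : ∑ x : E → α, f x * (c * (QQ f (insert e Y) x)⁻¹ - 1
          - Real.log (c * (QQ f (insert e Y) x)⁻¹)) = 0 :=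
        le_antisymm hGle (Finset.sum_nonneg htermG)
      have h := (Finset.sum_eq_zero_iff_of_nonneg htermG).mp hG0 x₀ (Finset.mem_univ x₀)
      rcases mul_eq_zero.mp h with h | h
      · exact absurd h hx₀
      · set t : ℝ := c * (QQ f (insert e Y) x₀)⁻¹ with htdef
        have ht0 : 0 < t := mul_pos hc0 (inv_pos.mpr (hQQpos x₀ hx₀))
        have ht1 : t = 1 := by
          by_contra hne
          have := Real.log_lt_sub_one_of_pos ht0 hne
          linarith
        have : QQ f (insert e Y) x₀ = c := by
          have hq' : QQ f (insert e Y) x₀ ≠ 0 := ne_of_gt (hQQpos x₀ hx₀)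
          rw [htdef] at ht1
          exact ((mul_inv_eq_one₀ hq').mp ht1).symm
        rw [this, hc]

end auxSS

open Finset in
lemma mem_nset_iff {I E α : Type*} [Fintype I] (A : I → E → α) (i : I) (e : E)
    (Y : Finset E) (a : α) :
    a ∈ nset A i e Y ↔ ∃ j : I, (∀ y ∈ Y, A j y = A i y) ∧ A j e = a := by
  unfold nset
  simp


/-- Every `p`-entropic matroid is a secret-sharing matroid over an alphabet of size `p`:
the matrix whose rows are the positive-probability outcomes is a secret-sharing matrix,
and the secret-sharing matroid it induces (rank `Y ↦ log_{|α|}` of the number of distinct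
rows on the columns `Y`) coincides with the given matroid. -/
theorem entropic_is_secret_sharing {E α : Type*} [Fintype E] [Fintype α]
    (μ : PMF (E → α)) (r : Finset E → ℕ)
    (hent : ∀ S : Finset E, shannonEntropy (Fintype.card α) (marg μ S) = r S) :
    IsSecretSharingMatrix (fun i : {x : E → α // μ x ≠ 0} => (i.1 : E → α)) ∧
    ∀ Y : Finset E,
      (Finset.univ.image
          fun i : {x : E → α // μ x ≠ 0} => fun y : {e // e ∈ Y} => i.1 y.1).card =
        Fintype.card α ^ r Y := by
  classical
  set p := Fintype.card α with hpdef
  set f : (E → α) → ℝ := fun x => (μ x).toReal with hfdef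
  have hf : ∀ x, 0 ≤ f x := fun x => ENNReal.toReal_nonneg
  have hf1 : ∑ x : E → α, f x = 1 := sum_pmf_toReal_eq_one μ
  have hfne : ∀ x : E → α, f x ≠ 0 ↔ μ x ≠ 0 := by
    intro x
    constructor
    · intro h h0
      apply h
      show (μ x).toReal = 0
      rw [h0]; simp
    · intro h h0
      have h0' : (μ x).toReal = 0 := h0
      rcases (ENNReal.toReal_eq_zero_iff _).mp h0' with h1 | h1
      · exact h h1
      · exact PMF.apply_ne_top μ x h1
  have hH : ∀ Y : Finset E,
      ∑ x : E → α, f x * Real.logb p (QQ f Y x) = -(r Y : ℝ) := by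
    intro Y
    have h := hent Y
    rw [entropy_bridge μ p Y] at h
    linarith
  have himg : ∀ Y : Finset E,
      (Finset.univ.image
        (fun i : {x : E → α // μ x ≠ 0} => fun y : {e // e ∈ Y} => i.1 y.1))
      = Finset.univ.filter (fun s : {e // e ∈ Y} → α => PP f Y s ≠ 0) := by
    intro Y
    ext s
    simp only [Finset.mem_image, Finset.mem_filter, Finset.mem_univ, true_and]
    rw [PP_ne_zero_iff hf]
    constructor
    · rintro ⟨i, heq⟩
      exact ⟨i.1, (hfne _).mpr i.2, heq⟩
    · rintro ⟨x, hx, hres⟩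
      exact ⟨⟨x, (hfne x).mp hx⟩, hres⟩
  by_cases hp2 : 2 ≤ p
  · -- main case
    have hu := uniform_key hf hf1 hp2 r hH
    have hq0 : (0:ℝ) < (p:ℝ) := by positivity
    have hcount : ∀ Y : Finset E,
        ((Finset.univ.filter fun s : {e // e ∈ Y} → α => PP f Y s ≠ 0).card : ℝ)
          = (p:ℝ) ^ r Y := fun Y => count_of_uniform hf hf1 hq0 (hu Y)
    constructor
    · intro e Y heY
      have hcard : ∀ i : {x : E → α // μ x ≠ 0},
          (nset (fun i : {x : E → α // μ x ≠ 0} => (i.1 : E → α)) i e Y).card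
            * p ^ r Y = p ^ r (insert e Y) := by
        intro i
        have hfi : f i.1 ≠ 0 := (hfne _).mpr i.2
        have h1 : QQ f Y i.1 = ((p:ℝ) ^ r Y)⁻¹ := hu Y i.1 hfi
        have h2 : QQ f Y i.1 = ∑ a : α, VV f Y e i.1 a := QQ_eq_sum_VV f Y e i.1
        have h3 : ∀ a : α, VV f Y e i.1 a =
            if a ∈ nset (fun i : {x : E → α // μ x ≠ 0} => (i.1 : E → α)) i e Y
            then ((p:ℝ) ^ r (insert e Y))⁻¹ else 0 := by
          intro a
          by_cases hmem : a ∈ nset (fun i : {x : E → α // μ x ≠ 0} => (i.1 : E → α)) i e Y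
          · rw [if_pos hmem]
            obtain ⟨j, hagree, hje⟩ := (mem_nset_iff _ i e Y a).mp hmem
            rw [VV_eq_QQ_insert f hagree hje]
            exact hu (insert e Y) j.1 ((hfne _).mpr j.2)
          · rw [if_neg hmem]
            by_contra hne
            obtain ⟨z, hz, hz1, hz2⟩ := (VV_ne_zero_iff hf Y e i.1 a).mp hne
            exact hmem ((mem_nset_iff _ i e Y a).mpr
              ⟨⟨z, (hfne z).mp hz⟩, hz1, hz2⟩)
        rw [h1, Finset.sum_congr rfl (fun a _ => h3 a), Finset.sum_ite_mem,
          Finset.univ_inter, Finset.sum_const, nsmul_eq_mul] at h2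
        have hreal : ((nset (fun i : {x : E → α // μ x ≠ 0} => (i.1 : E → α)) i e Y).card : ℝ)
            * (p:ℝ) ^ r Y = (p:ℝ) ^ r (insert e Y) := by
          have hne1 : ((p:ℝ) ^ r Y) ≠ 0 := by positivity
          have hne2 : ((p:ℝ) ^ r (insert e Y)) ≠ 0 := by positivity
          field_simp at h2
          field_simp
          linarith
        exact_mod_cast hreal
      by_cases hrk : r (insert e Y) = r Y
      · right
        intro i
        have h := hcard i
        rw [hrk] at h
        have hppos : 0 < p ^ r Y := pow_pos (by omega) _
        exact Nat.eq_of_mul_eq_mul_right hppos (h.trans (one_mul _).symm)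
      · left
        intro i
        have hc := hcard i
        have hle : (nset (fun i : {x : E → α // μ x ≠ 0} => (i.1 : E → α)) i e Y).card ≤ p := by
          calc (nset (fun i : {x : E → α // μ x ≠ 0} => (i.1 : E → α)) i e Y).card
              ≤ (Finset.univ : Finset α).card := Finset.card_le_card (Finset.subset_univ _)
            _ = p := Finset.card_univ
        have hge1 : 1 ≤ (nset (fun i : {x : E → α // μ x ≠ 0} => (i.1 : E → α)) i e Y).card :=
          Finset.card_pos.mpr ⟨i.1 e, (mem_nset_iff _ i e Y (i.1 e)).mpr ⟨i, fun y _ => rfl, rfl⟩⟩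
        have hgt : r Y < r (insert e Y) := by
          rcases Nat.lt_or_ge (r Y) (r (insert e Y)) with h | h
          · exact h
          · exfalso
            have h5 : p ^ r (insert e Y) ≤ p ^ r Y := Nat.pow_le_pow_right (by omega) h
            have h6 : p ^ r Y ≤ p ^ r (insert e Y) := by
              calc p ^ r Y = 1 * p ^ r Y := (one_mul _).symm
                _ ≤ (nset (fun i : {x : E → α // μ x ≠ 0} => (i.1 : E → α)) i e Y).card
                    * p ^ r Y := Nat.mul_le_mul_right _ hge1
                _ = p ^ r (insert e Y) := hc
            exact hrk (Nat.pow_right_injective hp2 (Nat.le_antisymm h5 h6))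
        have hgep : p ≤ (nset (fun i : {x : E → α // μ x ≠ 0} => (i.1 : E → α)) i e Y).card := by
          have hppos : 0 < p ^ r Y := pow_pos (by omega) _
          have h7 : p * p ^ r Y
              ≤ (nset (fun i : {x : E → α // μ x ≠ 0} => (i.1 : E → α)) i e Y).card
                * p ^ r Y := by
            rw [hc]
            calc p * p ^ r Y = p ^ (r Y + 1) := by ring
              _ ≤ p ^ r (insert e Y) := Nat.pow_le_pow_right (by omega) hgt
          exact Nat.le_of_mul_le_mul_right h7 hppos
        have hcardeq : (nset (fun i : {x : E → α // μ x ≠ 0} => (i.1 : E → α)) i e Y).card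
            = Fintype.card α := le_antisymm hle hgep
        exact Finset.eq_univ_of_card _ hcardeq
    · intro Y
      rw [himg Y]
      have h := hcount Y
      exact_mod_cast h
  · -- degenerate case
    have hsub : Subsingleton α := Fintype.card_le_one_iff_subsingleton.mp (by omega)
    have hQQ1 : ∀ (Y : Finset E) (x : E → α), QQ f Y x = 1 := by
      intro Y x
      calc QQ f Y x = ∑ x' : E → α, f x' :=
            Finset.sum_congr rfl fun x' _ => if_pos fun y _ => Subsingleton.elim _ _
        _ = 1 := hf1
    have hr0 : ∀ Y : Finset E, r Y = 0 := by
      intro Y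
      have h := hH Y
      have hzero : ∑ x : E → α, f x * Real.logb (↑p) (QQ f Y x) = 0 := by
        refine Finset.sum_eq_zero fun x _ => ?_
        rw [hQQ1 Y x, Real.logb_one, mul_zero]
      rw [hzero] at h
      have : (r Y : ℝ) = 0 := by linarith
      exact_mod_cast this
    have hex : ∃ x : E → α, μ x ≠ 0 := by
      by_contra hc
      push_neg at hc
      have hz : ∑ x : E → α, f x = 0 := Finset.sum_eq_zero fun x _ => by
        show (μ x).toReal = 0
        rw [hc x]; simp
      rw [hf1] at hz
      exact one_ne_zero hz
    obtain ⟨x₀, hx₀⟩ := hex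
    constructor
    · intro e Y heY
      right
      intro i
      rw [Finset.card_eq_one]
      refine ⟨i.1 e, Finset.eq_singleton_iff_unique_mem.mpr ⟨?_, ?_⟩⟩
      · exact (mem_nset_iff _ i e Y (i.1 e)).mpr ⟨i, fun y _ => rfl, rfl⟩
      · intro a _
        exact Subsingleton.elim a (i.1 e)
    · intro Y
      rw [hr0 Y, pow_zero, Finset.card_eq_one]
      refine ⟨fun y => x₀ y.1, Finset.eq_singleton_iff_unique_mem.mpr ⟨?_, ?_⟩⟩
      · simp only [Finset.mem_image, Finset.mem_univ, true_and]
        exact ⟨⟨x₀, hx₀⟩, rfl⟩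
      · intro s _
        exact Subsingleton.elim s _
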